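/- (Lemma 4.1.) Let c ∈ (0,√2), set λ = √(2−c²)/2 and ω = √(2+c²)/2, and let θ_m < 0 and t* with ωt* ∈ (π, 2π) satisfy e^{2λt*} = θ_m² + 2λθ_m + 1 and cos(ωt*)/sin(ωt*) = (λθ_m + 1)/(ωθ_m). Then for every p ∈ (0,1) and every θ with θ_m < θ < θ₂ and θ ≠ θ₁, one has L(c,p,θ) ≤ 1 − (c/π)·(√(2−c²) + θ_m). -/

import Mathlib

open Real Filter Set
open Topology

set_option maxHeartbeats 2000000

/-- `ξ = p c⁴ / 4`. -/
noncomputable def xiPar (c p : ℝ) : ℝ := p * c ^ 4 / 4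

/-- `κ₁ = √((c² − √(c⁴ − 4ξ))/2)`. -/
noncomputable def kappa1 (c p : ℝ) : ℝ :=
  Real.sqrt ((c ^ 2 - Real.sqrt (c ^ 4 - 4 * xiPar c p)) / 2)

/-- `κ₂ = √((c² + √(c⁴ − 4ξ))/2)`. -/
noncomputable def kappa2 (c p : ℝ) : ℝ :=
  Real.sqrt ((c ^ 2 + Real.sqrt (c ^ 4 - 4 * xiPar c p)) / 2)

/-- The function `L(c,p,θ)` from the paper. -/
noncomputable def Lfun (c p θ : ℝ) : ℝ :=
  (1 / 2) * (1 + kappa2 c p / kappa1 c p)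
  + (1 / Real.pi) * Real.arctan
      ((kappa2 c p * (-(kappa1 c p) ^ 2 + xiPar c p + xiPar c p * θ * Real.sqrt (2 - c ^ 2))) /
       (xiPar c p * (θ * (kappa1 c p) ^ 2 + Real.sqrt (2 - c ^ 2) + θ * (1 - c ^ 2))))
  - (kappa2 c p / (kappa1 c p * Real.pi)) * Real.arctan
      ((kappa1 c p * (-(kappa2 c p) ^ 2 + xiPar c p + xiPar c p * θ * Real.sqrt (2 - c ^ 2))) /
       (xiPar c p * (θ * (kappa2 c p) ^ 2 + Real.sqrt (2 - c ^ 2) + θ * (1 - c ^ 2))))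

/-- The discontinuity point `θ₁ = −2√(2−c²)/(2−c² − c²√(1−p))`. -/
noncomputable def theta1 (c p : ℝ) : ℝ :=
  -2 * Real.sqrt (2 - c ^ 2) / (2 - c ^ 2 - c ^ 2 * Real.sqrt (1 - p))

/-- The discontinuity point `θ₂ = −2√(2−c²)/(2−c² + c²√(1−p))`. -/
noncomputable def theta2 (c p : ℝ) : ℝ :=
  -2 * Real.sqrt (2 - c ^ 2) / (2 - c ^ 2 + c ^ 2 * Real.sqrt (1 - p))

/-- The threshold `p₀ = 4(c²−1)/c⁴`. -/
noncomputable def p0 (c : ℝ) : ℝ := 4 * (c ^ 2 - 1) / c ^ 4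

/-- Auxiliary: a sharp lower bound for the second arctan term.
With `a = κ₁²`, `b = κ₂²`, `ξ = ab`, `s = √(2-c²)` (so `s² = 2-a-b`), and
`T = θ₂ = -s/(1-a)`, the function `y ↦ arctan(n y / d y)` has derivative
`√a/(1+a y²) ≤ √a` and tends to `π/2` as `y → T⁻`; hence it is bounded below by
`π/2 + √a (x - T)` for `x < T`. -/
lemma aux_arctan_bound (a b s T x : ℝ) (ha0 : 0 < a) (hb0 : 0 < b) (ha1 : a < 1)
    (hab : a * b < 1) (hs0 : 0 < s) (hs2 : s ^ 2 = 2 - a - b)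
    (hT : T * (1 - a) = -s) (hx : x < T) :
    Real.pi / 2 + Real.sqrt a * (x - T) ≤
      Real.arctan ((Real.sqrt a * (-b + a * b + a * b * x * s)) /
        ((a * b) * ((1 - a) * x + s))) := by
  set K := Real.sqrt a with hKdef
  have hK2 : K ^ 2 = a := Real.sq_sqrt ha0.le
  have hKpos : 0 < K := Real.sqrt_pos.2 ha0
  have hab0 : 0 < a * b := mul_pos ha0 hb0
  have h1a : 0 < 1 - a := by linarith
  set n : ℝ → ℝ := fun y => K * (-b + a * b + a * b * y * s) with hn_def
  set d : ℝ → ℝ := fun y => (a * b) * ((1 - a) * y + s) with hd_def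
  set f : ℝ → ℝ := fun y => Real.arctan (n y / d y) - K * y with hf_def
  -- the denominator is negative on `Iio T`
  have hd_neg : ∀ y ∈ Iio T, d y < 0 := by
    intro y hy
    have hy' : y < T := hy
    have hprod : 0 < (1 - a) * (T - y) := mul_pos h1a (sub_pos.2 hy')
    have : (1 - a) * y + s < 0 := by linarith [hT, hprod]
    have := mul_neg_of_pos_of_neg hab0 this
    simpa [hd_def] using this
  -- derivative of f
  have hderiv : ∀ y ∈ Iio T, HasDerivAt f
      (1 / (1 + (n y / d y) ^ 2) *
        ((K * (a * b * s) * d y - n y * (a * b * (1 - a))) / (d y) ^ 2) - K * 1) y := by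
    intro y hy
    have hd0 : d y ≠ 0 := (hd_neg y hy).ne
    have hn' : HasDerivAt n (K * (a * b * s)) y := by
      have h1 : HasDerivAt (fun y : ℝ => -b + a * b + a * b * y * s) (a * b * s) y := by
        have := (((hasDerivAt_id y).const_mul (a * b)).mul_const s).const_add (-b + a * b)
        simpa using this
      simpa using h1.const_mul K
    have hd' : HasDerivAt d (a * b * (1 - a)) y := by
      have := (((hasDerivAt_id y).const_mul (1 - a)).add_const s).const_mul (a * b)
      simpa using this
    have hq : HasDerivAt (fun y => n y / d y)
        ((K * (a * b * s) * d y - n y * (a * b * (1 - a))) / (d y) ^ 2) y := hn'.div hd' hd0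
    have ha' : HasDerivAt (fun y => Real.arctan (n y / d y))
        (1 / (1 + (n y / d y) ^ 2) *
          ((K * (a * b * s) * d y - n y * (a * b * (1 - a))) / (d y) ^ 2)) y := hq.arctan
    exact ha'.sub ((hasDerivAt_id y).const_mul K)
  -- the derivative is nonpositive
  have hE : ∀ y ∈ Iio T,
      1 / (1 + (n y / d y) ^ 2) *
        ((K * (a * b * s) * d y - n y * (a * b * (1 - a))) / (d y) ^ 2) - K * 1 ≤ 0 := by
    intro y hy
    have hd0 : d y ≠ 0 := (hd_neg y hy).ne
    have hdd : 0 < (d y) ^ 2 + (n y) ^ 2 := by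
      have h1 := pow_two_pos_of_ne_zero (hd_neg y hy).ne
      linarith [sq_nonneg (n y)]
    have hrw : 1 / (1 + (n y / d y) ^ 2) *
        ((K * (a * b * s) * d y - n y * (a * b * (1 - a))) / (d y) ^ 2)
        = (K * (a * b * s) * d y - n y * (a * b * (1 - a))) / ((d y) ^ 2 + (n y) ^ 2) := by
      field_simp
    have hnum : K * (a * b * s) * d y - n y * (a * b * (1 - a))
        = K * (b * (a * b) * (1 - a * b)) := by
      simp only [hn_def, hd_def]
      linear_combination (K * (a * b) ^ 2) * hs2
    have hsum : (d y) ^ 2 + (n y) ^ 2 = (a * b) * (1 - a * b) * (b + (a * b) * y ^ 2) := by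
      simp only [hn_def, hd_def]
      linear_combination ((a * b) ^ 2 * (1 + a * y ^ 2)) * hs2
        + ((-b + a * b + a * b * y * s) ^ 2) * hK2
    rw [hrw, hnum, hsum]
    have h1ab : 0 < 1 - a * b := by linarith
    have hpos : 0 < (a * b) * (1 - a * b) * (b + (a * b) * y ^ 2) := by
      have h' : 0 < b + (a * b) * y ^ 2 := by
        have := mul_nonneg hab0.le (sq_nonneg y)
        linarith
      positivity
    rw [sub_nonpos, div_le_iff₀ hpos]
    have hnn : 0 ≤ K * ((a * b) * ((1 - a * b) * ((a * b) * y ^ 2))) :=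
      mul_nonneg hKpos.le (mul_nonneg hab0.le (mul_nonneg h1ab.le
        (mul_nonneg hab0.le (sq_nonneg y))))
    have hid : K * 1 * ((a * b) * (1 - a * b) * (b + (a * b) * y ^ 2))
        - K * (b * (a * b) * (1 - a * b)) = K * ((a * b) * ((1 - a * b) * ((a * b) * y ^ 2))) := by
      ring
    linarith
  -- antitone
  have hanti : AntitoneOn f (Iio T) := by
    apply antitoneOn_of_deriv_nonpos (convex_Iio T)
    · intro y hy
      exact ((hderiv y hy).continuousAt).continuousWithinAt
    · rw [interior_Iio]
      intro y hy
      exact (hderiv y hy).differentiableAt.differentiableWithinAt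
    · rw [interior_Iio]
      intro y hy
      rw [(hderiv y hy).deriv]
      have := hE y hy
      linarith
  -- value of n at T is negative
  have hinnerm : (-b + a * b + a * b * T * s) * (1 - a) = -(b * (1 - a * b)) := by
    linear_combination (a * b * s) * hT + (-(a * b)) * hs2
  have hnT_neg : n T < 0 := by
    have hinner : -b + a * b + a * b * T * s < 0 := by
      nlinarith [hinnerm, mul_pos hb0 (show (0:ℝ) < 1 - a * b by linarith), h1a]
    have := mul_neg_of_pos_of_neg hKpos hinner
    simpa [hn_def] using this
  -- linear form of d
  have hdlin : ∀ y, d y = (a * b * (1 - a)) * (y - T) := by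
    intro y
    simp only [hd_def]
    linear_combination (a * b) * hT
  -- tendsto of f at T from the left
  have h1 : Tendsto (fun y => T - y) (𝓝[<] T) (𝓝[>] (0 : ℝ)) := by
    rw [tendsto_nhdsWithin_iff]
    constructor
    · have : Tendsto (fun y => T - y) (𝓝 T) (𝓝 (T - T)) :=
        (continuous_const.sub continuous_id).tendsto T
      simpa using this.mono_left nhdsWithin_le_nhds
    · filter_upwards [self_mem_nhdsWithin] with y hy
      exact mem_Ioi.2 (sub_pos.2 hy)
  have h2 : Tendsto (fun y => (T - y)⁻¹) (𝓝[<] T) atTop := tendsto_inv_nhdsGT_zero.comp h1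
  have h3 : Tendsto (fun y => -(T - y)⁻¹) (𝓝[<] T) atBot := tendsto_neg_atTop_atBot.comp h2
  have hncont : Continuous n := by
    simp only [hn_def]
    continuity
  have h4 : Tendsto (fun y => n y * (a * b * (1 - a))⁻¹) (𝓝[<] T)
      (𝓝 (n T * (a * b * (1 - a))⁻¹)) :=
    ((hncont.mul continuous_const).tendsto T).mono_left nhdsWithin_le_nhds
  have hL0 : n T * (a * b * (1 - a))⁻¹ < 0 := by
    apply mul_neg_of_neg_of_pos hnT_neg
    positivity
  have h5 : Tendsto (fun y => (-(T - y)⁻¹) * (n y * (a * b * (1 - a))⁻¹)) (𝓝[<] T) atTop :=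
    h3.atBot_mul_neg hL0 h4
  have h6 : Tendsto (fun y => n y / d y) (𝓝[<] T) atTop := by
    apply h5.congr'
    filter_upwards [self_mem_nhdsWithin] with y hy
    have hyT : y - T ≠ 0 := sub_ne_zero.2 (ne_of_lt hy)
    have hTy : T - y ≠ 0 := sub_ne_zero.2 (ne_of_gt hy)
    have hane : a ≠ 0 := ha0.ne'
    have hbne : b ≠ 0 := hb0.ne'
    have h1ane : (1 : ℝ) - a ≠ 0 := h1a.ne'
    rw [hdlin y]
    field_simp
    ring
  have harct : Tendsto (fun y => Real.arctan (n y / d y)) (𝓝[<] T) (𝓝 (Real.pi / 2)) :=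
    (Real.tendsto_arctan_atTop.comp h6).mono_right nhdsWithin_le_nhds
  have hlin : Tendsto (fun y : ℝ => K * y) (𝓝[<] T) (𝓝 (K * T)) :=
    ((continuous_const.mul continuous_id).tendsto T).mono_left nhdsWithin_le_nhds
  have htendf : Tendsto f (𝓝[<] T) (𝓝 (Real.pi / 2 - K * T)) := harct.sub hlin
  have hle : Real.pi / 2 - K * T ≤ f x := by
    apply le_of_tendsto htendf
    filter_upwards [Ioo_mem_nhdsLT hx] with y hy
    exact hanti (mem_Iio.2 hx) (mem_Iio.2 hy.2) hy.1.le
  have : Real.pi / 2 - K * T ≤ Real.arctan (n x / d x) - K * x := hle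
  have hfin : Real.pi / 2 + K * (x - T) ≤ Real.arctan (n x / d x) := by linarith [this]
  simpa [hn_def, hd_def] using hfin

/-- Lemma 4.1: Let `c ∈ (0,√2)`, `λ = √(2−c²)/2`, `ω = √(2+c²)/2`, and
let `θ_m < 0` and `t*` with `ωt* ∈ (π,2π)` satisfy `e^{2λt*} = θ_m² + 2λθ_m + 1` and
`cos(ωt*)/sin(ωt*) = (λθ_m + 1)/(ωθ_m)`. Then for every `p ∈ (0,1)` and every
`θ ∈ (θ_m, θ₂)` with `θ ≠ θ₁`, one has `L(c,p,θ) ≤ 1 − (c/π)(√(2−c²) + θ_m)`. -/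
theorem stmt18 (c : ℝ) (hc : c ∈ Set.Ioo 0 (Real.sqrt 2))
    (lam ω : ℝ) (hlam : lam = Real.sqrt (2 - c ^ 2) / 2)
    (hω : ω = Real.sqrt (2 + c ^ 2) / 2)
    (θm tstar : ℝ) (hθm : θm < 0)
    (ht : ω * tstar ∈ Set.Ioo Real.pi (2 * Real.pi))
    (heq1 : Real.exp (2 * lam * tstar) = θm ^ 2 + 2 * lam * θm + 1)
    (heq2 : Real.cos (ω * tstar) / Real.sin (ω * tstar) = (lam * θm + 1) / (ω * θm)) :
    ∀ p ∈ Set.Ioo (0 : ℝ) 1, ∀ θ : ℝ, θm < θ → θ < theta2 c p → θ ≠ theta1 c p →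
      Lfun c p θ ≤ 1 - (c / Real.pi) * (Real.sqrt (2 - c ^ 2) + θm) := by
  obtain ⟨hc0, hcs⟩ := hc
  intro p hp θ hθmθ hθT _
  clear heq1 heq2 ht hlam hω hθm
  clear lam ω tstar
  obtain ⟨hp0, hp1⟩ := hp
  have hπ : (0 : ℝ) < Real.pi := Real.pi_pos
  have hc2 : c ^ 2 < 2 := by
    nlinarith [Real.sq_sqrt (by norm_num : (0:ℝ) ≤ 2), Real.sqrt_nonneg 2]
  set u := Real.sqrt (1 - p) with hu_def
  have hu2 : u ^ 2 = 1 - p := Real.sq_sqrt (by linarith)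
  have hu0 : 0 < u := Real.sqrt_pos.2 (by linarith)
  have hu1 : u < 1 := by nlinarith
  set a := c ^ 2 * (1 - u) / 2 with ha_def
  set b := c ^ 2 * (1 + u) / 2 with hb_def
  have hcsq : 0 < c ^ 2 := by positivity
  have ha0 : 0 < a := by
    rw [ha_def]
    exact div_pos (mul_pos hcsq (by linarith)) (by norm_num)
  have hb0 : 0 < b := by
    rw [hb_def]
    exact div_pos (mul_pos hcsq (by linarith)) (by norm_num)
  have ha1 : a < 1 := by rw [ha_def]; nlinarith [hcsq, hu0, hc2]
  have hcab : c ^ 2 = a + b := by rw [ha_def, hb_def]; ring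
  have hab : a * b < 1 := by
    have habp : a * b = p * c ^ 4 / 4 := by
      rw [ha_def, hb_def]; linear_combination (-(c ^ 4 / 4)) * hu2
    have hc4 : c ^ 4 < 4 := by nlinarith [hcsq, hc2]
    rw [habp]
    nlinarith [hp0, hp1, hc4, pow_pos hc0 4]
  set s := Real.sqrt (2 - c ^ 2) with hs_def
  have hs0 : 0 < s := Real.sqrt_pos.2 (by linarith)
  have hs2c : s ^ 2 = 2 - c ^ 2 := Real.sq_sqrt (by linarith)
  have hs2 : s ^ 2 = 2 - a - b := by rw [hs2c, hcab]; ring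
  -- xiPar and kappas
  have hxi : xiPar c p = a * b := by
    unfold xiPar
    rw [ha_def, hb_def]; linear_combination (c ^ 4 / 4) * hu2
  have h4 : c ^ 4 - 4 * xiPar c p = (c ^ 2 * u) ^ 2 := by
    rw [hxi, ha_def, hb_def]; ring
  have hk1 : kappa1 c p = Real.sqrt a := by
    unfold kappa1
    rw [h4, Real.sqrt_sq (by positivity)]
    congr 1
    rw [ha_def]; ring
  have hk2 : kappa2 c p = Real.sqrt b := by
    unfold kappa2
    rw [h4, Real.sqrt_sq (by positivity)]
    congr 1
    rw [hb_def]; ring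
  have hk1sq : (Real.sqrt a) ^ 2 = a := Real.sq_sqrt ha0.le
  have hk2sq : (Real.sqrt b) ^ 2 = b := Real.sq_sqrt hb0.le
  have hk1pos : 0 < Real.sqrt a := Real.sqrt_pos.2 ha0
  have hk2pos : 0 < Real.sqrt b := Real.sqrt_pos.2 hb0
  have hk2c : Real.sqrt b ≤ c := by
    have : b ≤ c ^ 2 := by rw [hb_def]; nlinarith [hcsq, hu1]
    calc Real.sqrt b ≤ Real.sqrt (c ^ 2) := Real.sqrt_le_sqrt this
    _ = c := Real.sqrt_sq hc0.le
  -- theta2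
  set T := theta2 c p with hT_def
  have h1a : 0 < 1 - a := by linarith
  have hT : T * (1 - a) = -s := by
    have hD : 2 - c ^ 2 + c ^ 2 * u = 2 * (1 - a) := by rw [ha_def]; ring
    rw [hT_def]
    unfold theta2
    rw [← hs_def, hD]
    rw [div_mul_eq_mul_div, div_eq_iff (by positivity : (2:ℝ) * (1 - a) ≠ 0)]
    ring
  have hsT : s + T ≤ 0 := by
    have hid : (s + T) * (1 - a) = -(a * s) := by linear_combination hT
    nlinarith [mul_pos ha0 hs0, h1a]
  -- the key arctan bound
  have hB := aux_arctan_bound a b s T θ ha0 hb0 ha1 hab hs0 hs2 hT hθT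
  -- rewrite Lfun
  have hden2 : (a * b) * (θ * (Real.sqrt b) ^ 2 + s + θ * (1 - c ^ 2))
      = (a * b) * ((1 - a) * θ + s) := by
    rw [hk2sq, hcab]; ring
  have hnum2 : Real.sqrt a * (-(Real.sqrt b) ^ 2 + a * b + a * b * θ * s)
      = Real.sqrt a * (-b + a * b + a * b * θ * s) := by
    rw [hk2sq]
  have hL : Lfun c p θ = (1 / 2) * (1 + Real.sqrt b / Real.sqrt a)
      + (1 / Real.pi) * Real.arctan
        ((Real.sqrt b * (-(Real.sqrt a) ^ 2 + a * b + a * b * θ * s)) /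
         ((a * b) * (θ * (Real.sqrt a) ^ 2 + s + θ * (1 - c ^ 2))))
      - (Real.sqrt b / (Real.sqrt a * Real.pi)) * Real.arctan
        ((Real.sqrt a * (-b + a * b + a * b * θ * s)) /
         ((a * b) * ((1 - a) * θ + s))) := by
    unfold Lfun
    rw [← hs_def, hk1, hk2, hxi, hnum2, hden2]
  rw [hL]
  -- bound the first arctan by π/2 and use hB for the second
  have hA := Real.arctan_lt_pi_div_two
    ((Real.sqrt b * (-(Real.sqrt a) ^ 2 + a * b + a * b * θ * s)) /
     ((a * b) * (θ * (Real.sqrt a) ^ 2 + s + θ * (1 - c ^ 2))))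
  have hcoef : 0 < Real.sqrt b / (Real.sqrt a * Real.pi) := by positivity
  have hstep1 : (1 / Real.pi) * Real.arctan
      ((Real.sqrt b * (-(Real.sqrt a) ^ 2 + a * b + a * b * θ * s)) /
       ((a * b) * (θ * (Real.sqrt a) ^ 2 + s + θ * (1 - c ^ 2))))
      ≤ (1 / Real.pi) * (Real.pi / 2) :=
    mul_le_mul_of_nonneg_left hA.le (by positivity)
  have hstep2 : (Real.sqrt b / (Real.sqrt a * Real.pi)) * (Real.pi / 2 + Real.sqrt a * (θ - T))
      ≤ (Real.sqrt b / (Real.sqrt a * Real.pi)) * Real.arctan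
        ((Real.sqrt a * (-b + a * b + a * b * θ * s)) /
         ((a * b) * ((1 - a) * θ + s))) :=
    mul_le_mul_of_nonneg_left hB hcoef.le
  have hsimp : (1 / 2) * (1 + Real.sqrt b / Real.sqrt a) + (1 / Real.pi) * (Real.pi / 2)
      - (Real.sqrt b / (Real.sqrt a * Real.pi)) * (Real.pi / 2 + Real.sqrt a * (θ - T))
      = 1 - (Real.sqrt b / Real.pi) * (θ - T) := by
    field_simp
    ring
  have hfin : c * (s + θm) ≤ Real.sqrt b * (θ - T) := by
    have h1 : 0 ≤ (c - Real.sqrt b) * (T - θ) :=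
      mul_nonneg (by linarith) (by linarith)
    have h2 : 0 ≤ c * (θ - θm) := mul_nonneg hc0.le (by linarith)
    have h3 : c * (s + T) ≤ 0 := mul_nonpos_of_nonneg_of_nonpos hc0.le hsT
    linarith [h1, h2, h3]
  have hfin2 : (c / Real.pi) * (s + θm) ≤ (Real.sqrt b / Real.pi) * (θ - T) := by
    rw [div_mul_eq_mul_div, div_mul_eq_mul_div]
    exact div_le_div_of_nonneg_right hfin hπ.le
  linarith
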